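/- Let (g,D) be a difference Lie algebra over a field k, (V,ϱ,K) a representation of (g,D), ω: g × g → V an alternating bilinear map and χ: g → V a linear map satisfying the 2-cocycle conditions: for all x,y,z ∈ g, (1) ϱ(x)ω(y,z) − ϱ(y)ω(x,z) + ϱ(z)ω(x,y) − ω(⁅x,y⁆, z) + ω(⁅x,z⁆, y) − ω(⁅y,z⁆, x) = 0, and (2) K(ω(x,y)) + χ(⁅x,y⁆) = ω(D x, y) + ω(x, D y) + ω(D x, D y) + ϱ(x)χ(y) − ϱ(y)χ(x) + ϱ(D x)χ(y) − ϱ(D y)χ(x). Define on g × V the bracket B_ω((x,u),(y,v)) = (⁅x,y⁆, ϱ(x)v − ϱ(y)u + ω(x,y)) and the map D_χ(x,u) = (D x, K u + χ(x)). Then B_ω is alternating and satisfies the Jacobi identity B_ω(B_ω(X,Y),Z) + B_ω(B_ω(Y,Z),X) + B_ω(B_ω(Z,X),Y) = 0 for all X,Y,Z ∈ g × V, and D_χ satisfies D_χ(B_ω(X,Y)) = B_ω(D_χ X, Y) + B_ω(X, D_χ Y) + B_ω(D_χ X, D_χ Y) for all X,Y ∈ g × V; thus (g ⊕ V, B_ω,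 D_χ) is a difference Lie algebra, giving an abelian extension of (g,D) by (V,K). -/
import Mathlib


section

variable {k : Type*} [Field k] {g : Type*} [LieRing g] [LieAlgebra k g]
  {V : Type*} [AddCommGroup V] [Module k V]

/-- The bracket on `g × V` twisted by a 2-cochain `ω`:
`B_ω((x,u),(y,v)) = (⁅x,y⁆, ϱ(x)v − ϱ(y)u + ω(x,y))`. -/
def extBracket (ϱ : g →ₗ[k] Module.End k V) (ω : g → g → V) (X Y : g × V) : g × V :=
  (⁅X.1, Y.1⁆, ϱ X.1 Y.2 - ϱ Y.1 X.2 + ω X.1 Y.1)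

/-- The operator on `g × V` twisted by a 1-cochain `χ`: `D_χ(x,u) = (D x, K u + χ(x))`. -/
def extOp (D : g →ₗ[k] g) (K : V →ₗ[k] V) (χ : g → V) (X : g × V) : g × V :=
  (D X.1, K X.2 + χ X.1)

end

/-- Given a 2-cocycle `(ω, χ)` of a difference Lie algebra `(g, D)` with coefficients in a
representation `(V, ϱ, K)`, the bracket `B_ω` on `g ⊕ V` is alternating and satisfies the
Jacobi identity, and `D_χ` is a difference operator for it; thus `(g ⊕ V, B_ω, D_χ)` is a
difference Lie algebra, an abelian extension of `(g, D)` by `(V, K)`. -/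
theorem two_cocycle_gives_abelian_extension {k : Type*} [Field k] {g : Type*}
    [LieRing g] [LieAlgebra k g] {V : Type*} [AddCommGroup V] [Module k V]
    (D : g →ₗ[k] g)
    (hD : ∀ x y : g, D ⁅x, y⁆ = ⁅D x, y⁆ + ⁅x, D y⁆ + ⁅D x, D y⁆)
    (ϱ : g →ₗ[k] Module.End k V)
    (hrep : ∀ x y : g, ϱ ⁅x, y⁆ = ϱ x ∘ₗ ϱ y - ϱ y ∘ₗ ϱ x)
    (K : V →ₗ[k] V)
    (hK : ∀ (x : g) (u : V), K (ϱ x u) = ϱ (D x) u + ϱ x (K u) + ϱ (D x) (K u))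
    (ω : g →ₗ[k] g →ₗ[k] V) (hω : ∀ x : g, ω x x = 0)
    (χ : g →ₗ[k] V)
    (hcocycle1 : ∀ x y z : g,
      ϱ x (ω y z) - ϱ y (ω x z) + ϱ z (ω x y) -
        ω ⁅x, y⁆ z + ω ⁅x, z⁆ y - ω ⁅y, z⁆ x = 0)
    (hcocycle2 : ∀ x y : g,
      K (ω x y) + χ ⁅x, y⁆ =
        ω (D x) y + ω x (D y) + ω (D x) (D y) +
        ϱ x (χ y) - ϱ y (χ x) + ϱ (D x) (χ y) - ϱ (D y) (χ x)) :
    (∀ X : g × V, extBracket ϱ (fun a b => ω a b) X X = 0) ∧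
    (∀ X Y Z : g × V,
      extBracket ϱ (fun a b => ω a b) (extBracket ϱ (fun a b => ω a b) X Y) Z +
      extBracket ϱ (fun a b => ω a b) (extBracket ϱ (fun a b => ω a b) Y Z) X +
      extBracket ϱ (fun a b => ω a b) (extBracket ϱ (fun a b => ω a b) Z X) Y = 0) ∧
    (∀ X Y : g × V,
      extOp D K ⇑χ (extBracket ϱ (fun a b => ω a b) X Y) =
        extBracket ϱ (fun a b => ω a b) (extOp D K ⇑χ X) Y +
        extBracket ϱ (fun a b => ω a b) X (extOp D K ⇑χ Y) +
        extBracket ϱ (fun a b => ω a b) (extOp D K ⇑χ X) (extOp D K ⇑χ Y)) := by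
  have hskew : ∀ a b : g, ω a b = - ω b a := by
    intro a b
    have h := hω (a + b)
    simp only [map_add, LinearMap.add_apply, hω] at h
    have h' : ω a b + ω b a = 0 := by
      rw [← h]; abel
    exact eq_neg_of_add_eq_zero_left h'
  refine ⟨?_, ?_, ?_⟩
  · intro ⟨x, u⟩
    simp [extBracket, hω]
  · rintro ⟨x, u⟩ ⟨y, v⟩ ⟨z, w⟩
    simp only [extBracket, Prod.mk_add_mk, Prod.mk_eq_zero]
    constructor
    · rw [← lie_skew ⁅x, y⁆ z, ← lie_skew ⁅y, z⁆ x, ← lie_skew ⁅z, x⁆ y]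
      have j : ⁅z, ⁅x, y⁆⁆ + (⁅x, ⁅y, z⁆⁆ + ⁅y, ⁅z, x⁆⁆) = 0 := by
        rw [← lie_jacobi z x y]; abel
      rw [eq_neg_of_add_eq_zero_left j]
      abel
    · simp only [hrep, LinearMap.sub_apply, LinearMap.comp_apply, map_add, map_sub,
        ← lie_skew z x, map_neg, LinearMap.neg_apply, hskew z x]
      rw [← neg_eq_zero]; rw [← hcocycle1 x y z]
      abel
  · rintro ⟨x, u⟩ ⟨y, v⟩
    simp only [extOp, extBracket, Prod.mk_add_mk, Prod.mk.injEq]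
    constructor
    · exact hD x y
    · have h2 := hcocycle2 x y
      simp only [map_add, map_sub, hK, map_add] at *
      rw [show K (ω x y) = (ω (D x)) y + (ω x) (D y) + (ω (D x)) (D y) +
          (ϱ x) (χ y) - (ϱ y) (χ x) + (ϱ (D x)) (χ y) - (ϱ (D y)) (χ x) - χ ⁅x, y⁆ from by
        rw [← h2]; abel]
      abel
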